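/- The function g(x) = 1/sinh(x) − 1/x (for x > 0) has derivative g'(x) > 0 for all x > 0. -/

import Mathlib

open Real

lemma cosh_lb : ∀ x : ℝ, 0 < x → 1 + x^2/2 < Real.cosh x := by
  intro x hx
  have hmono : StrictMonoOn (fun y : ℝ => Real.cosh y - 1 - y^2/2) (Set.Ici 0) := by
    apply strictMonoOn_of_deriv_pos (convex_Ici 0)
    · fun_prop
    · intro y hy
      rw [interior_Ici] at hy
      have hd : HasDerivAt (fun y : ℝ => Real.cosh y - 1 - y^2/2) (Real.sinh y - y) y := by
        have := ((Real.hasDerivAt_cosh y).sub_const 1).sub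
          (((hasDerivAt_id y).pow 2).div_const 2)
        exact this.congr_deriv (by simp)
      rw [hd.deriv]
      have := Real.self_lt_sinh_iff.2 hy
      linarith
  have := hmono (Set.self_mem_Ici) (Set.mem_Ici.2 hx.le) hx
  simp at this
  linarith

lemma sinh_lb : ∀ x : ℝ, 0 ≤ x → x + x^3/6 ≤ Real.sinh x := by
  intro x hx
  have hmono : StrictMonoOn (fun y : ℝ => Real.sinh y - y - y^3/6) (Set.Ici 0) := by
    apply strictMonoOn_of_deriv_pos (convex_Ici 0)
    · fun_prop
    · intro y hy
      rw [interior_Ici] at hy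
      have hd : HasDerivAt (fun y : ℝ => Real.sinh y - y - y^3/6) (Real.cosh y - 1 - y^2/2) y := by
        have := ((Real.hasDerivAt_sinh y).sub (hasDerivAt_id y)).sub
          (((hasDerivAt_id y).pow 3).div_const 6)
        refine this.congr_deriv ?_
        simp [id]
        ring
      rw [hd.deriv]
      have h1 : 1 + y^2/2 < Real.cosh y := cosh_lb y hy
      linarith
  rcases eq_or_lt_of_le hx with h | h
  · simp [← h]
  · have := hmono (Set.self_mem_Ici) (Set.mem_Ici.2 hx) h
    simp at this
    linarith

lemma core_ineq (x s c : ℝ) (hx : 0 < x) (hs : x + x^3/6 ≤ s) (hc : 0 < c)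
    (hcs : c^2 = 1 + s^2) : x^2 * c < 2*s^2 - x*s := by
  have hsx : x < s := by nlinarith [pow_pos hx 3]
  have ha : 0 < 2*s^2 - x*s := by nlinarith
  have hb : 0 < x^2*c := by positivity
  have h2 : 0 < x^2 - x^4/3 + x^6/9 := by nlinarith [sq_nonneg (x^3/3 - x/2), pow_pos hx 2]
  have hd : x + x^3/3 ≤ 2*s - x := by linarith
  have h1 : x^2 - x^4/3 + x^6/9 ≤ (2*s-x)^2 - x^4 := by
    have := mul_le_mul hd hd (by positivity) (by linarith [pow_pos hx 3])
    nlinarith [this]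
  have h3 : (x + x^3/6)^2 ≤ s^2 := by nlinarith
  have he : (x + x^3/6)^2 * (x^2 - x^4/3 + x^6/9) ≤ s^2 * ((2*s-x)^2 - x^4) :=
    mul_le_mul h3 h1 h2.le (by positivity)
  have key : (x^2*c)^2 < (2*s^2 - x*s)^2 := by
    have h4 : (x^2*c)^2 = x^4*(1+s^2) := by rw [mul_pow, hcs]; ring
    rw [h4]
    nlinarith [he, pow_pos hx 8, pow_pos hx 10, pow_pos hx 12]
  nlinarith [key, ha, hb]

/-- `f(x) = (1/sinh x − 1/x)/x`. -/
noncomputable def fAux (x : ℝ) : ℝ := (1 / Real.sinh x - 1 / x) / x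

/-- The function `f(x) = (1/sinh x − 1/x)/x` satisfies `f'(x) > 0`
for all `x > 0` (the monotonicity fact used in the integration-by-parts estimates). -/
theorem stmt5 : ∀ x : ℝ, 0 < x → 0 < deriv fAux x := by
  intro x hx
  have hx0 : x ≠ 0 := ne_of_gt hx
  have hs0 : 0 < Real.sinh x := Real.sinh_pos_iff.2 hx
  have hsne : Real.sinh x ≠ 0 := ne_of_gt hs0
  set s := Real.sinh x with hsdef
  set c := Real.cosh x with hcdef
  have h1 : HasDerivAt (fun y => 1 / Real.sinh y) ((0 * s - 1 * c) / s^2) x :=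
    (hasDerivAt_const x (1:ℝ)).div (Real.hasDerivAt_sinh x) hsne
  have h2 : HasDerivAt (fun y : ℝ => 1 / y) ((0 * x - 1 * 1) / x^2) x :=
    (hasDerivAt_const x (1:ℝ)).div (hasDerivAt_id x) hx0
  have h3 : HasDerivAt fAux
      ((((0 * s - 1 * c) / s^2 - (0 * x - 1 * 1) / x^2) * x - (1/s - 1/x) * 1) / x^2) x := by
    exact (h1.sub h2).div (hasDerivAt_id x) hx0
  have hD : deriv fAux x = (((0 * s - 1 * c) / s^2 - (0 * x - 1 * 1) / x^2) * x - (1/s - 1/x) * 1) / x^2 :=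
    h3.deriv
  rw [hD]
  have heq : (((0 * s - 1 * c) / s^2 - (0 * x - 1 * 1) / x^2) * x - (1/s - 1/x) * 1) / x^2
      = (2*s^2 - x*s - x^2*c) / (x^3 * s^2) := by
    field_simp
    ring
  rw [heq]
  apply div_pos
  · have := core_ineq x s c hx (sinh_lb x hx.le) (Real.cosh_pos x) (Real.cosh_sq' x)
    linarith
  · positivity
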